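/- All zeros of the matching polynomial μ_G(z) of a graph G are real, and if the maximum degree Δ of G satisfies Δ ≥ 2, then all zeros lie in the open interval (-2√(Δ-1), 2√(Δ-1)). -/
import Mathlib


open SimpleGraph Finset
open scoped Classical

/-- A finite set of edges forms a matching if every vertex lies in at most one of its edges. -/
def IsMatchingSet {V : Type*} (M : Finset (Sym2 V)) : Prop :=
  ∀ v : V, (M.filter (fun e => v ∈ e)).card ≤ 1

/-- The set of matchings of `G` (including the empty matching), as a `Finset`. -/
noncomputable def matchings {V : Type*} [Fintype V] (G : SimpleGraph V) :
    Finset (Finset (Sym2 V)) :=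
  G.edgeFinset.powerset.filter IsMatchingSet

/-- The matching polynomial `μ_G(x) = Σ_k (-1)^k m_k(G) x^{n-2k}`, evaluated at a complex `x`. -/
noncomputable def matchingPolyC {V : Type*} [Fintype V] (G : SimpleGraph V) (x : ℂ) : ℂ :=
  ∑ M ∈ matchings G, (-1 : ℂ) ^ M.card * x ^ (Fintype.card V - 2 * M.card)

namespace HLaux

variable {V : Type*} [Fintype V] (G : SimpleGraph V)

/-- Edges of `G` with both endpoints in `S`. -/
noncomputable def edgesIn (S : Finset V) : Finset (Sym2 V) :=
  G.edgeFinset.filter (fun e => ∀ w ∈ e, w ∈ S)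

/-- Matchings of the induced subgraph on `S`. -/
noncomputable def smatch (S : Finset V) : Finset (Finset (Sym2 V)) :=
  (edgesIn G S).powerset.filter IsMatchingSet

/-- The matching polynomial of the induced subgraph on `S`. -/
noncomputable def mp (S : Finset V) {K : Type*} [Field K] (x : K) : K :=
  ∑ M ∈ smatch G S, (-1 : K) ^ M.card * x ^ (S.card - 2 * M.card)

lemma mem_smatch {S : Finset V} {M : Finset (Sym2 V)} :
    M ∈ smatch G S ↔ M ⊆ edgesIn G S ∧ IsMatchingSet M := by
  simp [smatch, Finset.mem_filter, Finset.mem_powerset]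

lemma vertex_mem_of_mem {S : Finset V} {e : Sym2 V} (he : e ∈ edgesIn G S) {w : V}
    (hw : w ∈ e) : w ∈ S := by
  rw [edgesIn, Finset.mem_filter] at he
  exact he.2 w hw

lemma adj_of_mem_edgesIn {S : Finset V} {e : Sym2 V} (he : e ∈ edgesIn G S) :
    e ∈ G.edgeSet := by
  rw [edgesIn, Finset.mem_filter, SimpleGraph.mem_edgeFinset] at he
  exact he.1

lemma edgesIn_mono {S T : Finset V} (h : S ⊆ T) : edgesIn G S ⊆ edgesIn G T := by
  intro e he
  rw [edgesIn, Finset.mem_filter] at he ⊢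
  exact ⟨he.1, fun w hw => h (he.2 w hw)⟩

lemma card_filter_mem_edge {S : Finset V} {e : Sym2 V} (he : e ∈ edgesIn G S) :
    (S.filter (fun w => w ∈ e)).card = 2 := by
  have h1 := adj_of_mem_edgesIn G he
  have h2 : ∀ w ∈ e, w ∈ S := fun w hw => vertex_mem_of_mem G he hw
  clear he
  induction e using Sym2.inductionOn with
  | hf a b =>
    have hab : a ≠ b := (G.mem_edgeSet.mp h1).ne
    have ha : a ∈ S := h2 a (by simp)
    have hb : b ∈ S := h2 b (by simp)
    have : S.filter (fun w => w ∈ (s(a, b) : Sym2 V)) = {a, b} := by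
      ext w
      simp only [Finset.mem_filter, Sym2.mem_iff, Finset.mem_insert, Finset.mem_singleton]
      constructor
      · rintro ⟨-, h⟩; exact h
      · rintro (rfl | rfl)
        · exact ⟨ha, Or.inl rfl⟩
        · exact ⟨hb, Or.inr rfl⟩
    rw [this, Finset.card_insert_of_notMem (by simp [hab]), Finset.card_singleton]

lemma two_mul_card_le {S : Finset V} {M : Finset (Sym2 V)} (hM : M ∈ smatch G S) :
    2 * M.card ≤ S.card := by
  obtain ⟨hsub, hmatch⟩ := (mem_smatch G).mp hM
  calc 2 * M.card = ∑ _e ∈ M, 2 := by rw [Finset.sum_const, smul_eq_mul, mul_comm]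
    _ = ∑ e ∈ M, (S.filter (fun w => w ∈ e)).card :=
        Finset.sum_congr rfl fun e he => (card_filter_mem_edge G (hsub he)).symm
    _ = ∑ e ∈ M, ∑ w ∈ S, if w ∈ e then 1 else 0 := by
        refine Finset.sum_congr rfl fun e _ => ?_
        rw [Finset.card_filter]
    _ = ∑ w ∈ S, ∑ e ∈ M, if w ∈ e then 1 else 0 := Finset.sum_comm
    _ = ∑ w ∈ S, (M.filter (fun e => w ∈ e)).card := by
        refine Finset.sum_congr rfl fun w _ => ?_
        rw [Finset.card_filter]
    _ ≤ ∑ _w ∈ S, 1 := Finset.sum_le_sum fun w _ => hmatch w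
    _ = S.card := by simp

lemma smatch_empty : smatch G (∅ : Finset V) = {∅} := by
  have hE : edgesIn G (∅ : Finset V) = ∅ := by
    ext e
    simp only [edgesIn, Finset.mem_filter, Finset.notMem_empty, iff_false, not_and]
    intro he h
    obtain ⟨a, b⟩ := e
    exact h a (by simp)
  ext M
  simp only [smatch, hE, Finset.powerset_empty, Finset.mem_filter, Finset.mem_singleton]
  constructor
  · rintro ⟨h, -⟩; exact h
  · rintro rfl
    exact ⟨rfl, fun v => by simp [IsMatchingSet]⟩

lemma mp_empty {K : Type*} [Field K] (x : K) : mp G (∅ : Finset V) x = 1 := by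
  rw [mp, smatch_empty]
  simp

lemma edge_not_mem {T : Finset V} {M' : Finset (Sym2 V)} (hM' : M' ∈ smatch G T)
    {e : Sym2 V} {w : V} (hw : w ∈ e) (hwT : w ∉ T) : e ∉ M' :=
  fun h => hwT (vertex_mem_of_mem G (((mem_smatch G).mp hM').1 h) hw)

lemma smatch_erase {S : Finset V} {v : V} {M : Finset (Sym2 V)} :
    M ∈ smatch G (S.erase v) ↔ M ∈ smatch G S ∧ ∀ e ∈ M, v ∉ e := by
  rw [mem_smatch, mem_smatch]
  constructor
  · rintro ⟨hsub, hm⟩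
    refine ⟨⟨fun e he => edgesIn_mono G (Finset.erase_subset v S) (hsub he), hm⟩, ?_⟩
    intro e he hve
    exact (Finset.mem_erase.mp (vertex_mem_of_mem G (hsub he) hve)).1 rfl
  · rintro ⟨⟨hsub, hm⟩, hv⟩
    refine ⟨fun e he => ?_, hm⟩
    have h1 := hsub he
    rw [edgesIn, Finset.mem_filter] at h1 ⊢
    refine ⟨h1.1, fun w hw => Finset.mem_erase.mpr ⟨?_, h1.2 w hw⟩⟩
    rintro rfl; exact hv e he hw

lemma smatch_cover {S : Finset V} {v : V} (hv : v ∈ S) {M : Finset (Sym2 V)} :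
    (M ∈ smatch G S ∧ ¬ (∀ e ∈ M, v ∉ e)) ↔
      ∃ u ∈ (S.erase v).filter (G.Adj v), ∃ M' ∈ smatch G ((S.erase v).erase u),
        insert s(v, u) M' = M := by
  constructor
  · rintro ⟨hM, h2⟩
    push_neg at h2
    obtain ⟨e, heM, hve⟩ := h2
    obtain ⟨u, rfl⟩ := Sym2.mem_iff_exists.mp hve
    obtain ⟨hsub, hm⟩ := (mem_smatch G).mp hM
    have he' := hsub heM
    have adj : G.Adj v u := G.mem_edgeSet.mp (adj_of_mem_edgesIn G he')
    have huS : u ∈ S := vertex_mem_of_mem G he' (by simp)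
    have key : ∀ w ∈ (s(v, u) : Sym2 V), ∀ f ∈ M.erase s(v, u), w ∉ f := by
      intro w hw f hf hwf
      have h2' : ({s(v, u), f} : Finset (Sym2 V)) ⊆ M.filter (fun e => w ∈ e) := by
        intro g hg
        rw [Finset.mem_insert, Finset.mem_singleton] at hg
        rcases hg with rfl | rfl
        · exact Finset.mem_filter.mpr ⟨heM, hw⟩
        · exact Finset.mem_filter.mpr ⟨Finset.mem_of_mem_erase hf, hwf⟩
      have hne : (s(v, u) : Sym2 V) ≠ f := (Finset.ne_of_mem_erase hf).symm
      have hc := Finset.card_le_card h2'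
      rw [Finset.card_insert_of_notMem (by simpa using hne), Finset.card_singleton] at hc
      exact absurd (le_trans hc (hm w)) (by norm_num)
    refine ⟨u, Finset.mem_filter.mpr ⟨Finset.mem_erase.mpr ⟨adj.ne', huS⟩, adj⟩,
      M.erase s(v, u), ?_, Finset.insert_erase heM⟩
    rw [mem_smatch]
    constructor
    · intro f hf
      have hfS := hsub (Finset.mem_of_mem_erase hf)
      rw [edgesIn, Finset.mem_filter] at hfS ⊢
      refine ⟨hfS.1, fun w hw => Finset.mem_erase.mpr ⟨?_, Finset.mem_erase.mpr
        ⟨?_, hfS.2 w hw⟩⟩⟩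
      · rintro rfl; exact key w (by simp) f hf hw
      · rintro rfl; exact key w (by simp) f hf hw
    · intro w
      exact le_trans (Finset.card_le_card
        (Finset.filter_subset_filter _ (Finset.erase_subset _ _))) (hm w)
  · rintro ⟨u, hu, M', hM', rfl⟩
    rw [Finset.mem_filter, Finset.mem_erase] at hu
    obtain ⟨⟨huv, huS⟩, adj⟩ := hu
    obtain ⟨hsub', hm'⟩ := (mem_smatch G).mp hM'
    have hnoe : ∀ f ∈ M', ∀ w ∈ f, w ≠ v ∧ w ≠ u := by
      intro f hf w hw
      have := vertex_mem_of_mem G (hsub' hf) hw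
      rw [Finset.mem_erase, Finset.mem_erase] at this
      exact ⟨this.2.1, this.1⟩
    have heIn : (s(v, u) : Sym2 V) ∈ edgesIn G S := by
      rw [edgesIn, Finset.mem_filter, SimpleGraph.mem_edgeFinset]
      refine ⟨G.mem_edgeSet.mpr adj, fun w hw => ?_⟩
      rcases Sym2.mem_iff.mp hw with rfl | rfl
      exacts [hv, huS]
    constructor
    · rw [mem_smatch]
      constructor
      · intro f hf
        rcases Finset.mem_insert.mp hf with rfl | hf'
        · exact heIn
        · exact edgesIn_mono G (le_trans (Finset.erase_subset _ _)
            (Finset.erase_subset _ _)) (hsub' hf')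
      · intro w
        rw [Finset.filter_insert]
        split_ifs with hwe
        · have hemp : M'.filter (fun f => w ∈ f) = ∅ := by
            rw [Finset.filter_eq_empty_iff]
            intro f hf hwf
            rcases Sym2.mem_iff.mp hwe with rfl | rfl
            · exact (hnoe f hf w hwf).1 rfl
            · exact (hnoe f hf w hwf).2 rfl
          rw [hemp]
          simp
        · exact hm' w
    · push_neg
      refine ⟨s(v, u), Finset.mem_insert_self _ _, by simp⟩

lemma mp_rec {K : Type*} [Field K] (x : K) {S : Finset V} {v : V} (hv : v ∈ S) :
    mp G S x = x * mp G (S.erase v) x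
      - ∑ u ∈ (S.erase v).filter (G.Adj v), mp G ((S.erase v).erase u) x := by
  set S' := S.erase v with hS'
  have hcard1 : S'.card = S.card - 1 := by rw [hS', Finset.card_erase_of_mem hv]
  have hcards : 1 ≤ S.card := Finset.card_pos.mpr ⟨v, hv⟩
  rw [mp, ← Finset.sum_filter_add_sum_filter_not (smatch G S) (fun M => ∀ e ∈ M, v ∉ e)]
  have e1 : (smatch G S).filter (fun M => ∀ e ∈ M, v ∉ e) = smatch G S' := by
    ext M
    rw [Finset.mem_filter]
    exact (smatch_erase G).symm
  have sum1 : ∑ M ∈ (smatch G S).filter (fun M => ∀ e ∈ M, v ∉ e),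
      (-1 : K) ^ M.card * x ^ (S.card - 2 * M.card) = x * mp G S' x := by
    rw [e1]
    rw [mp, Finset.mul_sum]
    refine Finset.sum_congr rfl fun M hM => ?_
    have h2 : 2 * M.card ≤ S'.card := two_mul_card_le G hM
    have hex : S.card - 2 * M.card = (S'.card - 2 * M.card) + 1 := by omega
    rw [hex, pow_succ]
    ring
  have e2 : (smatch G S).filter (fun M => ¬ ∀ e ∈ M, v ∉ e)
      = (S'.filter (G.Adj v)).biUnion
          (fun u => (smatch G (S'.erase u)).image (insert s(v, u))) := by
    ext M
    simp only [Finset.mem_filter, Finset.mem_biUnion, Finset.mem_image]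
    rw [hS']
    constructor
    · intro h
      obtain ⟨u, hu, M', hM', he⟩ := (smatch_cover G hv).mp h
      exact ⟨u, Finset.mem_filter.mp hu, M', hM', he⟩
    · rintro ⟨u, hu, M', hM', he⟩
      exact (smatch_cover G hv).mpr ⟨u, Finset.mem_filter.mpr hu, M', hM', he⟩
  have hdisj : (↑(S'.filter (G.Adj v)) : Set V).PairwiseDisjoint
      (fun u => (smatch G (S'.erase u)).image (insert s(v, u))) := by
    intro u1 h1 u2 h2 hne
    rw [Function.onFun, Finset.disjoint_left]
    intro M hM1 hM2
    rw [Finset.mem_coe, Finset.mem_filter, Finset.mem_erase] at h1 h2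
    simp only [Finset.mem_image] at hM1 hM2
    obtain ⟨M1, hM1s, hM1e⟩ := hM1
    obtain ⟨M2, hM2s, hM2e⟩ := hM2
    have hMS : M ∈ smatch G S ∧ ¬ (∀ e ∈ M, v ∉ e) :=
      (smatch_cover G hv).mpr ⟨u1, Finset.mem_filter.mpr ⟨Finset.mem_erase.mpr h1.1, h1.2⟩,
        M1, hM1s, hM1e⟩
    have hm := ((mem_smatch G).mp hMS.1).2
    have hv1 : (s(v, u1) : Sym2 V) ∈ M := hM1e ▸ Finset.mem_insert_self _ _
    have hv2 : (s(v, u2) : Sym2 V) ∈ M := hM2e ▸ Finset.mem_insert_self _ _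
    have hne' : (s(v, u1) : Sym2 V) ≠ s(v, u2) := by
      intro h
      rw [Sym2.eq_iff] at h
      rcases h with ⟨-, h⟩ | ⟨h1, -⟩
      · exact hne h
      · exact h2.1.1 h1.symm
    have hsubf : ({s(v, u1), s(v, u2)} : Finset (Sym2 V)) ⊆ M.filter (fun e => v ∈ e) := by
      intro g hg
      rw [Finset.mem_insert, Finset.mem_singleton] at hg
      rcases hg with rfl | rfl
      · exact Finset.mem_filter.mpr ⟨hv1, by simp⟩
      · exact Finset.mem_filter.mpr ⟨hv2, by simp⟩
    have hc := Finset.card_le_card hsubf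
    rw [Finset.card_insert_of_notMem (by simpa using hne'), Finset.card_singleton] at hc
    exact absurd (le_trans hc (hm v)) (by norm_num)
  have sum2 : ∑ M ∈ (smatch G S).filter (fun M => ¬ ∀ e ∈ M, v ∉ e),
      (-1 : K) ^ M.card * x ^ (S.card - 2 * M.card)
      = - ∑ u ∈ S'.filter (G.Adj v), mp G (S'.erase u) x := by
    rw [e2, Finset.sum_biUnion hdisj, ← Finset.sum_neg_distrib]
    refine Finset.sum_congr rfl fun u hu => ?_
    rw [Finset.mem_filter] at hu
    have huS' : u ∈ S' := hu.1
    have hnot : ∀ M' ∈ smatch G (S'.erase u), (s(v, u) : Sym2 V) ∉ M' := by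
      intro M' hM'
      refine edge_not_mem G hM' (w := v) (by simp) ?_
      rw [Finset.mem_erase, hS', Finset.mem_erase]
      rintro ⟨-, h, -⟩
      exact h rfl
    rw [Finset.sum_image (fun M1 h1 M2 h2 heq => by
      rw [← Finset.erase_insert (hnot M1 h1), heq, Finset.erase_insert (hnot M2 h2)])]
    rw [mp, ← Finset.sum_neg_distrib]
    refine Finset.sum_congr rfl fun M' hM' => ?_
    have h2 : 2 * M'.card ≤ (S'.erase u).card := two_mul_card_le G hM'
    have hcu : (S'.erase u).card = S'.card - 1 := Finset.card_erase_of_mem huS'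
    have hS'1 : 1 ≤ S'.card := Finset.card_pos.mpr ⟨u, huS'⟩
    have hcc : 2 ≤ S.card := by omega
    rw [Finset.card_insert_of_notMem (hnot M' hM')]
    have hex : S.card - 2 * (M'.card + 1) = (S'.erase u).card - 2 * M'.card := by omega
    rw [hex, pow_succ]
    ring
  rw [sum1, sum2]
  ring

lemma complex_claim : ∀ S : Finset V, ∀ x : ℂ, 0 < x.im →
    mp G S x ≠ 0 ∧ ∀ v ∈ S, ((mp G (S.erase v) x) / mp G S x).im < 0 := by
  intro S
  induction S using Finset.strongInduction with
  | _ S ih =>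
    intro x hx
    rcases S.eq_empty_or_nonempty with rfl | ⟨v₀, hv₀⟩
    · refine ⟨by rw [mp_empty]; exact one_ne_zero, by simp⟩
    · have key : ∀ v ∈ S, ∃ h : ℂ, 0 < h.im ∧ mp G (S.erase v) x ≠ 0 ∧
          mp G S x = mp G (S.erase v) x * h := by
        intro v hv
        obtain ⟨h0, hrat⟩ := ih (S.erase v) (Finset.erase_ssubset hv) x hx
        refine ⟨x - ∑ u ∈ (S.erase v).filter (G.Adj v),
          mp G ((S.erase v).erase u) x / mp G (S.erase v) x, ?_, h0, ?_⟩
        · rw [Complex.sub_im, Complex.im_sum]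
          have hsum : ∑ u ∈ (S.erase v).filter (G.Adj v),
              (mp G ((S.erase v).erase u) x / mp G (S.erase v) x).im ≤ 0 :=
            Finset.sum_nonpos fun u hu => le_of_lt (hrat u (Finset.mem_filter.mp hu).1)
          linarith
        · rw [mp_rec G x hv, mul_sub, mul_comm (mp G (S.erase v) x) x, Finset.mul_sum]
          congr 1
          refine Finset.sum_congr rfl fun u hu => ?_
          rw [mul_comm, div_mul_cancel₀ _ h0]
      obtain ⟨h, hhim, h0, heq⟩ := key v₀ hv₀
      have hne : mp G S x ≠ 0 := by
        rw [heq]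
        exact mul_ne_zero h0 (fun hh => by simp [hh] at hhim)
      refine ⟨hne, fun v hv => ?_⟩
      obtain ⟨h', hhim', h0', heq'⟩ := key v hv
      rw [heq', div_mul_cancel_left₀ h0', Complex.inv_im]
      apply div_neg_of_neg_of_pos
      · linarith
      · exact Complex.normSq_pos.mpr (fun hh => by simp [hh] at hhim')

lemma real_claim (hΔ : 2 ≤ G.maxDegree) {x : ℝ}
    (hx : 2 * Real.sqrt ((G.maxDegree : ℝ) - 1) ≤ x) :
    ∀ S : Finset V, 0 < mp G S x ∧ ∀ v ∈ S,
      ((S.erase v).filter (G.Adj v)).card ≤ G.maxDegree - 1 →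
        mp G (S.erase v) x / mp G S x < 1 / Real.sqrt ((G.maxDegree : ℝ) - 1) := by
  set q := Real.sqrt ((G.maxDegree : ℝ) - 1) with hqdef
  have hΔR : (2 : ℝ) ≤ (G.maxDegree : ℝ) := by exact_mod_cast hΔ
  have hq1 : 1 ≤ q := by
    have h := Real.sqrt_le_sqrt (show (1:ℝ) ≤ (G.maxDegree:ℝ) - 1 by linarith)
    rwa [Real.sqrt_one] at h
  have hq0 : (0:ℝ) < q := by linarith
  have hq2 : q ^ 2 = (G.maxDegree : ℝ) - 1 := Real.sq_sqrt (by linarith)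
  intro S
  induction S using Finset.strongInduction with
  | _ S ih =>
    rcases S.eq_empty_or_nonempty with rfl | ⟨v₀, hv₀⟩
    · exact ⟨by rw [mp_empty]; norm_num, by simp⟩
    · have key : ∀ v ∈ S, 0 < mp G (S.erase v) x ∧ ∃ h : ℝ, 0 < h ∧
          mp G S x = mp G (S.erase v) x * h ∧
          (((S.erase v).filter (G.Adj v)).card ≤ G.maxDegree - 1 → q < h) := by
        intro v hv
        set S' := S.erase v with hS'
        set N := S'.filter (G.Adj v) with hN
        have hS'pos := (ih S' (Finset.erase_ssubset hv)).1
        refine ⟨hS'pos, x - ∑ u ∈ N, mp G (S'.erase u) x / mp G S' x, ?_⟩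
        have hrat : ∀ u ∈ N, 0 < mp G (S'.erase u) x / mp G S' x ∧
            mp G (S'.erase u) x / mp G S' x < 1 / q := by
          intro u hu
          rw [hN, Finset.mem_filter] at hu
          have hss : S'.erase u ⊂ S :=
            lt_of_lt_of_le (Finset.erase_ssubset hu.1) (le_of_lt (Finset.erase_ssubset hv))
          have hnum := (ih (S'.erase u) hss).1
          refine ⟨div_pos hnum hS'pos, ?_⟩
          refine (ih S' (Finset.erase_ssubset hv)).2 u hu.1 ?_
          have hvmem : v ∈ G.neighborFinset u := by
            rw [SimpleGraph.mem_neighborFinset]; exact hu.2.symm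
          have hsub2 : (S'.erase u).filter (G.Adj u) ⊆ (G.neighborFinset u).erase v := by
            intro w hw
            rw [Finset.mem_filter, Finset.mem_erase] at hw
            rw [Finset.mem_erase, SimpleGraph.mem_neighborFinset]
            refine ⟨?_, hw.2⟩
            have hwS : w ∈ S' := hw.1.2
            rw [hS', Finset.mem_erase] at hwS
            exact hwS.1
          have hcle := Finset.card_le_card hsub2
          rw [Finset.card_erase_of_mem hvmem] at hcle
          have hdeg : G.degree u ≤ G.maxDegree := G.degree_le_maxDegree u
          rw [← SimpleGraph.card_neighborFinset_eq_degree] at hdeg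
          omega
        have hcardN : N.card ≤ G.maxDegree := by
          have hsub3 : N ⊆ G.neighborFinset v := by
            intro w hw
            rw [hN, Finset.mem_filter] at hw
            rw [SimpleGraph.mem_neighborFinset]; exact hw.2
          have h1 := Finset.card_le_card hsub3
          have h2 : G.degree v ≤ G.maxDegree := G.degree_le_maxDegree v
          rw [← SimpleGraph.card_neighborFinset_eq_degree] at h2
          omega
        have hsumlt : N.Nonempty → ∑ u ∈ N, mp G (S'.erase u) x / mp G S' x < (N.card : ℝ) / q := by
          intro hNne
          have := Finset.sum_lt_sum_of_nonempty hNne (fun u hu => (hrat u hu).2)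
          rw [Finset.sum_const, nsmul_eq_mul] at this
          calc ∑ u ∈ N, mp G (S'.erase u) x / mp G S' x < (N.card : ℝ) * (1 / q) := this
            _ = (N.card : ℝ) / q := by ring
        refine ⟨?_, ?_, ?_⟩
        · -- 0 < h
          rcases N.eq_empty_or_nonempty with hNe | hNne
          · rw [hNe]; simp only [Finset.sum_empty, sub_zero]; linarith
          · have h1 := hsumlt hNne
            have h2 : (N.card : ℝ) ≤ (G.maxDegree : ℝ) := by exact_mod_cast hcardN
            have h3 : (N.card : ℝ) / q ≤ 2 * q := by
              rw [div_le_iff₀ hq0]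
              nlinarith
            linarith
        · -- mp S = mp S' * h
          rw [mp_rec G x hv, mul_sub, mul_comm (mp G S' x) x, Finset.mul_sum]
          congr 1
          refine Finset.sum_congr hN.symm fun u hu => ?_
          rw [mul_comm, div_mul_cancel₀ _ (ne_of_gt hS'pos)]
        · -- degree bound → q < h
          intro hdegb
          rcases N.eq_empty_or_nonempty with hNe | hNne
          · rw [hNe]; simp only [Finset.sum_empty, sub_zero]; linarith
          · have h1 := hsumlt hNne
            have h2 : (N.card : ℝ) ≤ (G.maxDegree : ℝ) - 1 := by
              have h5 : (1:ℕ) ≤ G.maxDegree := le_trans (by norm_num) hΔ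
              have h6 := (Nat.cast_le (α := ℝ)).mpr hdegb
              rwa [Nat.cast_sub h5, Nat.cast_one] at h6
            have h3 : (N.card : ℝ) / q ≤ q := by
              rw [div_le_iff₀ hq0]
              nlinarith
            linarith
      constructor
      · obtain ⟨hS'pos, h, hpos, heq, -⟩ := key v₀ hv₀
        rw [heq]
        exact mul_pos hS'pos hpos
      · intro v hv hdegb
        obtain ⟨hS'pos, h, hpos, heq, himp⟩ := key v hv
        have hqh := himp hdegb
        rw [heq, div_mul_cancel_left₀ (ne_of_gt hS'pos), one_div]
        exact inv_strictAnti₀ hq0 hqh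

lemma mp_conj (S : Finset V) (x : ℂ) :
    (starRingEnd ℂ) (mp G S x) = mp G S ((starRingEnd ℂ) x) := by
  rw [mp, mp, map_sum]
  refine Finset.sum_congr rfl fun M _ => ?_
  rw [map_mul, map_pow, map_pow, map_neg, map_one]

lemma mp_real (S : Finset V) (x : ℝ) : mp G S ((x : ℝ) : ℂ) = ((mp G S x : ℝ) : ℂ) := by
  rw [mp, mp]
  push_cast
  rfl

lemma mp_neg (S : Finset V) (x : ℝ) : mp G S (-x) = (-1) ^ S.card * mp G S x := by
  rw [mp, mp, Finset.mul_sum]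
  refine Finset.sum_congr rfl fun M hM => ?_
  have h2 := two_mul_card_le G hM
  have hkey : (-x) ^ (S.card - 2 * M.card) = (-1) ^ S.card * x ^ (S.card - 2 * M.card) := by
    rw [neg_pow]
    congr 1
    obtain ⟨m, hm⟩ : ∃ m, S.card = m + 2 * M.card := ⟨S.card - 2 * M.card, by omega⟩
    rw [hm]
    simp [pow_add, pow_mul, Nat.add_sub_cancel]
  rw [hkey]
  ring

lemma matchingPolyC_eq (x : ℂ) : matchingPolyC G x = mp G Finset.univ x := by
  have hE : edgesIn G (Finset.univ : Finset V) = G.edgeFinset :=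
    Finset.filter_true_of_mem (fun e _ => fun w _ => Finset.mem_univ w)
  have h1 : smatch G (Finset.univ : Finset V) = matchings G := by
    rw [smatch, hE, matchings]
  rw [matchingPolyC, mp, h1, Finset.card_univ]

end HLaux

/-- Heilmann–Lieb: all zeros of the matching polynomial are real, and if the
maximum degree `Δ` satisfies `Δ ≥ 2` then all zeros lie in `(-2√(Δ-1), 2√(Δ-1))`. -/
theorem heilmann_lieb {V : Type*} [Fintype V] [DecidableEq V] (G : SimpleGraph V)
    [DecidableRel G.Adj] :
    (∀ x : ℂ, matchingPolyC G x = 0 → ∃ r : ℝ, x = (r : ℂ)) ∧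
    (2 ≤ G.maxDegree →
      ∀ x : ℂ, matchingPolyC G x = 0 →
        ∃ r : ℝ, x = (r : ℂ) ∧ |r| < 2 * Real.sqrt ((G.maxDegree : ℝ) - 1)) := by
  have main1 : ∀ x : ℂ, matchingPolyC G x = 0 → ∃ r : ℝ, x = (r : ℂ) := by
    intro x hx
    rw [HLaux.matchingPolyC_eq] at hx
    refine ⟨x.re, ?_⟩
    rcases lt_trichotomy x.im 0 with hlt | heq | hgt
    · exfalso
      have h1 : 0 < ((starRingEnd ℂ) x).im := by rw [Complex.conj_im]; linarith
      refine (HLaux.complex_claim G Finset.univ _ h1).1 ?_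
      rw [← HLaux.mp_conj, hx, map_zero]
    · exact Complex.ext (by simp) (by simp [heq])
    · exact absurd hx (HLaux.complex_claim G Finset.univ x hgt).1
  refine ⟨main1, ?_⟩
  intro hΔ x hx
  obtain ⟨r, rfl⟩ := main1 x hx
  refine ⟨r, rfl, ?_⟩
  have hmd : @SimpleGraph.maxDegree V G _
      (fun a b => Classical.propDecidable (G.Adj a b)) = G.maxDegree := by
    congr!
  rw [HLaux.matchingPolyC_eq, HLaux.mp_real] at hx
  have h0 : HLaux.mp G Finset.univ r = 0 := by exact_mod_cast hx
  rw [← hmd]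
  by_contra hcon
  push_neg at hcon
  have hΔ' : 2 ≤ @SimpleGraph.maxDegree V G _
      (fun a b => Classical.propDecidable (G.Adj a b)) := by rw [hmd]; exact hΔ
  rcases abs_cases r with ⟨habs, hsign⟩ | ⟨habs, hsign⟩
  · have hpos := (HLaux.real_claim G hΔ' (x := r) (by rw [← habs]; exact hcon)
      Finset.univ).1
    rw [h0] at hpos
    exact lt_irrefl 0 hpos
  · have hpos := (HLaux.real_claim G hΔ' (x := -r) (by rw [← habs]; exact hcon)
      Finset.univ).1
    rw [HLaux.mp_neg, h0, mul_zero] at hpos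
    exact lt_irrefl 0 hpos
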